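/- There exists a resource selection game with a set E of 3 resources, nondecreasing continuous cost functions c_e, finitely many agent types i with masses n_i > 0 and uncertainty parameters r_i ≥ 1, together with a finite sequence of states s⁰, s¹, …, s^T with T ≥ 2, s^T = s⁰ and s¹ ≠ s⁰, such that for each t < T the state s^{t+1} is obtained from s^t by moving a positive mass of agents of a single type i from a resource e (carrying positive mass of type i in s^t) to a resource d ≠ e, and this move is improving for the movers under worst-case cost: c_d(r_i·s̄^{t+1}_d) < c_e(r_i·s̄^t_e). That is, best-response dynamics of WCC players with heterogeneous uncertainty levels can cycle. -/

import Mathlib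

open Finset

noncomputable def cc : Fin 3 → ℝ → ℝ :=
  ![fun x => 0 + 3 * max 0 (min (x - 1) 1),
    fun x => 2 + 2 * max 0 (min (x - 1) 1),
    fun x => 1 + 2 * max 0 (min (x - 2) 2)]

def St : ℕ → Fin 2 → Fin 3 → ℝ
  | 0 => ![![1,0,0], ![1,0,0]]
  | 1 => ![![0,1,0], ![1,0,0]]
  | 2 => ![![0,1,0], ![0,0,1]]
  | 3 => ![![0,0,1], ![0,0,1]]
  | 4 => ![![0,0,1], ![0,1,0]]
  | 5 => ![![1,0,0], ![0,1,0]]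
  | _ => ![![1,0,0], ![1,0,0]]

/-- Best-response dynamics of worst-case-cost players with heterogeneous uncertainty levels
can cycle: there is a resource selection game on 3 resources with nondecreasing continuous
cost functions, finitely many agent types with positive masses and uncertainty parameters
`r_i ≥ 1`, and a cyclic sequence of states `s⁰, s¹, …, s^T = s⁰` (with `T ≥ 2`, `s¹ ≠ s⁰`),
where each step moves a positive mass of agents of a single type from one resource to
another, strictly decreasing the movers' worst-case cost `c_e(r_i·s̄_e)`. -/
theorem stmt_11 :
    ∃ (m : ℕ) (c : Fin 3 → ℝ → ℝ) (mass : Fin m → ℝ) (r : Fin m → ℝ)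
      (T : ℕ) (s : ℕ → Fin m → Fin 3 → ℝ),
      0 < m ∧
      (∀ e, Monotone (c e)) ∧ (∀ e, Continuous (c e)) ∧
      (∀ i, 0 < mass i) ∧ (∀ i, 1 ≤ r i) ∧
      2 ≤ T ∧ s T = s 0 ∧ s 1 ≠ s 0 ∧
      (∀ t ≤ T, ∀ i e, 0 ≤ s t i e) ∧
      (∀ t ≤ T, ∀ i, ∑ e, s t i e = mass i) ∧
      (∀ t < T, ∃ (i : Fin m) (e d : Fin 3) (ε : ℝ),
        e ≠ d ∧ 0 < ε ∧ ε ≤ s t i e ∧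
        s (t + 1) i e = s t i e - ε ∧
        s (t + 1) i d = s t i d + ε ∧
        (∀ (i' : Fin m) (e' : Fin 3), (i' ≠ i ∨ (e' ≠ e ∧ e' ≠ d)) →
          s (t + 1) i' e' = s t i' e') ∧
        c d (r i * ∑ i', s (t + 1) i' d) < c e (r i * ∑ i', s t i' e)) := by
  have key : ∀ p q a b : ℝ, 0 ≤ q →
      Monotone (fun x : ℝ => p + q * max 0 (min (x - a) b)) ∧
      Continuous (fun x : ℝ => p + q * max 0 (min (x - a) b)) := by
    intro p q a b hq
    constructor
    · intro x y hxy
      dsimp only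
      have : max 0 (min (x - a) b) ≤ max 0 (min (y - a) b) := by
        apply max_le_max le_rfl
        exact min_le_min (by linarith) le_rfl
      have := mul_le_mul_of_nonneg_left this hq
      linarith
    · fun_prop
  have hmono : ∀ e, Monotone (cc e) := by
    intro e
    fin_cases e
    · exact (key 0 3 1 1 (by norm_num)).1
    · exact (key 2 2 1 1 (by norm_num)).1
    · exact (key 1 2 2 2 (by norm_num)).1
  have hcont : ∀ e, Continuous (cc e) := by
    intro e
    fin_cases e
    · exact (key 0 3 1 1 (by norm_num)).2
    · exact (key 2 2 1 1 (by norm_num)).2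
    · exact (key 1 2 2 2 (by norm_num)).2
  refine ⟨2, cc, fun _ => 1, ![1, 2], 6, St, by norm_num, hmono, hcont,
    fun _ => one_pos, ?_, by norm_num, rfl, ?_, ?_, ?_, ?_⟩
  · intro i; fin_cases i <;> norm_num
  · intro h
    have := congrFun (congrFun h 0) 0
    simp [St] at this
  · intro t ht i e
    interval_cases t <;> fin_cases i <;> fin_cases e <;> norm_num [St]
  · intro t ht i
    interval_cases t <;> fin_cases i <;> norm_num [Matrix.cons_val_two, St, Fin.sum_univ_three]
  · intro t ht
    interval_cases t
    · refine ⟨0, 0, 1, 1, by decide, one_pos, by norm_num [St], by norm_num [St],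
        by norm_num [St], ?_, ?_⟩
      · intro i' e' h
        fin_cases i' <;> fin_cases e' <;> simp_all [St]
      · norm_num [St, cc, Fin.sum_univ_two, min_def, max_def]
    · refine ⟨1, 0, 2, 1, by decide, one_pos, by norm_num [St], by norm_num [St],
        by norm_num [Matrix.cons_val_two, St], ?_, ?_⟩
      · intro i' e' h
        fin_cases i' <;> fin_cases e' <;> simp_all [St]
      · norm_num [Matrix.cons_val_two, St, cc, Fin.sum_univ_two, min_def, max_def]
    · refine ⟨0, 1, 2, 1, by decide, one_pos, by norm_num [St], by norm_num [St],
        by norm_num [Matrix.cons_val_two, St], ?_, ?_⟩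
      · intro i' e' h
        fin_cases i' <;> fin_cases e' <;> simp_all [St]
      · norm_num [Matrix.cons_val_two, St, cc, Fin.sum_univ_two, min_def, max_def]
    · refine ⟨1, 2, 1, 1, by decide, one_pos, by norm_num [Matrix.cons_val_two, St], by norm_num [Matrix.cons_val_two, St],
        by norm_num [St], ?_, ?_⟩
      · intro i' e' h
        fin_cases i' <;> fin_cases e' <;> simp_all [St]
      · norm_num [Matrix.cons_val_two, St, cc, Fin.sum_univ_two, min_def, max_def]
    · refine ⟨0, 2, 0, 1, by decide, one_pos, by norm_num [Matrix.cons_val_two, St], by norm_num [Matrix.cons_val_two, St],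
        by norm_num [St], ?_, ?_⟩
      · intro i' e' h
        fin_cases i' <;> fin_cases e' <;> simp_all [St]
      · norm_num [Matrix.cons_val_two, St, cc, Fin.sum_univ_two, min_def, max_def]
    · refine ⟨1, 1, 0, 1, by decide, one_pos, by norm_num [St], by norm_num [St],
        by norm_num [St], ?_, ?_⟩
      · intro i' e' h
        fin_cases i' <;> fin_cases e' <;> simp_all [St]
      · norm_num [St, cc, Fin.sum_univ_two, min_def, max_def]
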